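/- For x, y ∈ Z[ω], if gde(|x|², √2) = gde(|y|², √2) then gde(x, √2) = gde(y, √2). -/
import Mathlib


noncomputable section

open Complex

/-- The eighth root of unity ω = e^{iπ/4}. -/
def omg : ℂ := Complex.exp (Real.pi * Complex.I / 4)

/-- √2 as a complex number. -/
def rt2 : ℂ := (Real.sqrt 2 : ℝ)

/-- Membership in the ring Z[ω] = {a + bω + cω² + dω³ : a,b,c,d ∈ ℤ}. -/
def Zomega (z : ℂ) : Prop :=
  ∃ a b c d : ℤ, z = a + b * omg + c * omg ^ 2 + d * omg ^ 3

/-- Membership in the ring Z[1/√2, i] = {u/(√2)^n : u ∈ Z[ω], n ∈ ℕ}. -/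
def ZRoot2i (z : ℂ) : Prop :=
  ∃ u : ℂ, Zomega u ∧ ∃ n : ℕ, z = u / rt2 ^ n

/-- `b` divides `z` within the ring Z[ω]. -/
def ZDvd (b z : ℂ) : Prop := ∃ q : ℂ, Zomega q ∧ z = b * q

/-- `k` is the greatest dividing exponent of base `b` with respect to `z`:
`b^k` divides `z` in Z[ω], while `b^(k+1)` does not. -/
def IsGde (b z : ℂ) (k : ℕ) : Prop := ZDvd (b ^ k) z ∧ ¬ ZDvd (b ^ (k + 1)) z

/-- `k` is the smallest denominator exponent of base √2 with respect to `z`: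
the smallest integer `k` such that `z·(√2)^k ∈ Z[ω]`. -/
def IsSde (z : ℂ) (k : ℤ) : Prop :=
  Zomega (z * rt2 ^ k) ∧ ∀ j : ℤ, Zomega (z * rt2 ^ j) → k ≤ j

lemma rt2_sq : rt2 ^ 2 = 2 := by
  simp only [rt2]; norm_cast; rw [Real.sq_sqrt]; norm_num
lemma rt2_ne : rt2 ≠ 0 := by
  simp [rt2, Real.sqrt_eq_zero']
lemma omg_eq : omg = (Real.sqrt 2 / 2 : ℝ) + (Real.sqrt 2 / 2 : ℝ) * I := by
  have h : (Real.pi : ℂ) * I / 4 = ((Real.pi / 4 : ℝ) : ℂ) * I := by push_cast; ring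
  rw [omg, h, Complex.exp_mul_I, ← Complex.ofReal_cos, ← Complex.ofReal_sin,
    Real.cos_pi_div_four, Real.sin_pi_div_four]
lemma omg_sq : omg ^ 2 = I := by
  have h2 : ((Real.sqrt 2 : ℝ) : ℂ) ^ 2 = 2 := rt2_sq
  rw [omg_eq]; push_cast
  linear_combination (I/2) * h2 + (((Real.sqrt 2:ℝ):ℂ)^2/4) * Complex.I_sq
lemma omg_pow4 : omg ^ 4 = -1 := by
  rw [show (4:ℕ) = 2*2 from rfl, pow_mul, omg_sq, Complex.I_sq]
lemma rt2_eq : rt2 = omg - omg ^ 3 := by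
  have h2 : ((Real.sqrt 2 : ℝ) : ℂ) ^ 2 = 2 := rt2_sq
  rw [show rt2 = ((Real.sqrt 2:ℝ):ℂ) from rfl, omg_eq]; push_cast
  linear_combination ((((Real.sqrt 2:ℝ):ℂ))/4*(I-1)) * h2 +
    (3*(((Real.sqrt 2:ℝ):ℂ))^3/8 + (((Real.sqrt 2:ℝ):ℂ))^3/8*I) * Complex.I_sq
lemma conj_omg : (starRingEnd ℂ) omg = -omg ^ 3 := by
  have h2 : ((Real.sqrt 2 : ℝ) : ℂ) ^ 2 = 2 := rt2_sq
  rw [omg_eq, map_add, map_mul, Complex.conj_ofReal, Complex.conj_I]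
  push_cast
  linear_combination ((((Real.sqrt 2:ℝ):ℂ))/4*(I-1)) * h2 +
    (3*(((Real.sqrt 2:ℝ):ℂ))^3/8 + (((Real.sqrt 2:ℝ):ℂ))^3/8*I) * Complex.I_sq

/-- explicit multiplication formula -/
lemma repr_mul (a b c d p q r s : ℤ) :
    ((a:ℂ) + b*omg + c*omg^2 + d*omg^3) * ((p:ℂ) + q*omg + r*omg^2 + s*omg^3)
    = ((a*p - b*s - c*r - d*q : ℤ):ℂ) + ((a*q + b*p - c*s - d*r : ℤ):ℂ)*omg
      + ((a*r + b*q + c*p - d*s : ℤ):ℂ)*omg^2 + ((a*s + b*r + c*q + d*p : ℤ):ℂ)*omg^3 := by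
  push_cast
  linear_combination (((b:ℂ)*s + c*r + d*q) + ((c:ℂ)*s + d*r)*omg + (d:ℂ)*s*omg^2) * omg_pow4

lemma repr_conj (a b c d : ℤ) :
    (starRingEnd ℂ) ((a:ℂ) + b*omg + c*omg^2 + d*omg^3)
    = (a:ℂ) + (-d:ℤ)*omg + (-c:ℤ)*omg^2 + (-b:ℤ)*omg^3 := by
  simp only [map_add, map_mul, map_pow, map_intCast, conj_omg]
  push_cast
  linear_combination ((c:ℂ)*omg^2 - (d:ℂ)*omg*(omg^4-1)) * omg_pow4

lemma repr_rt2_mul (a b c d : ℤ) :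
    rt2 * ((a:ℂ) + b*omg + c*omg^2 + d*omg^3)
    = ((b-d:ℤ):ℂ) + ((a+c:ℤ):ℂ)*omg + ((b+d:ℤ):ℂ)*omg^2 + ((c-a:ℤ):ℂ)*omg^3 := by
  rw [rt2_eq]; push_cast
  linear_combination (((d:ℂ)-b) - (c:ℂ)*omg - (d:ℂ)*omg^2) * omg_pow4

lemma Zomega.mul {x y : ℂ} (hx : Zomega x) (hy : Zomega y) : Zomega (x * y) := by
  obtain ⟨a,b,c,d,rfl⟩ := hx; obtain ⟨p,q,r,s,rfl⟩ := hy
  exact ⟨_,_,_,_, repr_mul a b c d p q r s⟩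

lemma Zomega.conj {x : ℂ} (hx : Zomega x) : Zomega ((starRingEnd ℂ) x) := by
  obtain ⟨a,b,c,d,rfl⟩ := hx
  exact ⟨_,_,_,_, repr_conj a b c d⟩

lemma Zomega.rt2_mul {x : ℂ} (hx : Zomega x) : Zomega (rt2 * x) := by
  obtain ⟨a,b,c,d,rfl⟩ := hx
  exact ⟨_,_,_,_, repr_rt2_mul a b c d⟩

lemma Zomega.rt2_pow_mul (n : ℕ) {x : ℂ} (hx : Zomega x) : Zomega (rt2 ^ n * x) := by
  induction n with
  | zero => simpa using hx
  | succ n ih =>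
      have : rt2 ^ (n+1) * x = rt2 * (rt2 ^ n * x) := by ring
      rw [this]; exact (ih).rt2_mul

lemma zdvd_mono {z : ℂ} {m n : ℕ} (h : ZDvd (rt2 ^ m) z) (hnm : n ≤ m) : ZDvd (rt2 ^ n) z := by
  obtain ⟨q, hq, rfl⟩ := h
  exact ⟨rt2 ^ (m - n) * q, hq.rt2_pow_mul _, by rw [← mul_assoc, ← pow_add, Nat.add_sub_cancel' hnm]⟩

lemma int_sqrt {u v : ℤ} (h : (u:ℝ) + v * Real.sqrt 2 = 0) : u = 0 ∧ v = 0 := by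
  rcases eq_or_ne v 0 with hv | hv
  · subst hv; simp at h; exact ⟨by exact_mod_cast h, rfl⟩
  · exfalso
    have hs : Real.sqrt 2 = ((-u / v : ℚ) : ℝ) := by
      have hv' : (v:ℝ) ≠ 0 := Int.cast_ne_zero.mpr hv
      push_cast
      field_simp
      linarith
    exact irrational_sqrt_two ⟨_, hs.symm⟩

lemma indep {a b c d : ℤ} (h : (a:ℂ) + b*omg + c*omg^2 + d*omg^3 = 0) :
    a = 0 ∧ b = 0 ∧ c = 0 ∧ d = 0 := by
  have h3 : omg ^ 3 = -((Real.sqrt 2 / 2 : ℝ):ℂ) + ((Real.sqrt 2 / 2 : ℝ):ℂ) * I := by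
    have : omg ^ 3 = omg ^ 2 * omg := by ring
    rw [this, omg_sq, omg_eq]; push_cast
    linear_combination (((Real.sqrt 2:ℝ):ℂ)/2) * Complex.I_sq
  rw [omg_sq, h3, omg_eq] at h
  have hre := congrArg Complex.re h
  have him := congrArg Complex.im h
  simp [Complex.add_re, Complex.add_im, Complex.mul_re, Complex.mul_im] at hre him
  have h1 : (2*a : ℤ) = 0 ∧ (b - d : ℤ) = 0 := by
    apply int_sqrt; push_cast; nlinarith [hre]
  have h2 : (2*c : ℤ) = 0 ∧ (b + d : ℤ) = 0 := by
    apply int_sqrt; push_cast; nlinarith [him]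
  refine ⟨by omega, by omega, by omega, by omega⟩

lemma conj_rt2 : (starRingEnd ℂ) rt2 = rt2 := by
  rw [show rt2 = ((Real.sqrt 2:ℝ):ℂ) from rfl, Complex.conj_ofReal]

lemma zmod2_sq : ∀ z : ZMod 2, z ^ 2 = z := by decide
lemma zmod2_mul_eq_zero {u v : ZMod 2} (h : u * v = 0) : u = 0 ∨ v = 0 := by
  revert h; revert u v; decide

lemma key {x : ℂ} (hx : Zomega x) (h : ZDvd (rt2 ^ 2) (x * (starRingEnd ℂ) x)) :
    ZDvd rt2 x := by
  obtain ⟨a, b, c, d, rfl⟩ := hx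
  obtain ⟨w, ⟨p, q, r, s, rfl⟩, he⟩ := h
  rw [repr_conj, repr_mul] at he
  -- he : explicit coords = rt2^2 * (p + qω + rω² + sω³)
  have E : ((a*a - b*(-b) - c*(-c) - d*(-d) - 2*p : ℤ):ℂ)
      + ((a*(-d) + b*a - c*(-b) - d*(-c) - 2*q : ℤ):ℂ)*omg
      + ((a*(-c) + b*(-d) + c*a - d*(-b) - 2*r : ℤ):ℂ)*omg^2
      + ((a*(-b) + b*(-c) + c*(-d) + d*a - 2*s : ℤ):ℂ)*omg^3 = 0 := by
    push_cast at he ⊢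
    linear_combination he + ((p:ℂ) + q*omg + r*omg^2 + s*omg^3) * rt2_sq
  obtain ⟨e1, e2, e3, e4⟩ := indep E
  -- parity facts
  have hN : ((a^2 + b^2 + c^2 + d^2 : ℤ) : ZMod 2) = 0 := by
    have : (a*a - b*(-b) - c*(-c) - d*(-d) : ℤ) = 2*p := by omega
    have := congrArg (Int.cast : ℤ → ZMod 2) this
    have h20 : (2 : ZMod 2) = 0 := by decide
    push_cast at this ⊢; linear_combination this + (p : ZMod 2) * h20
  have hM : ((a*b + b*c + c*d - a*d : ℤ) : ZMod 2) = 0 := by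
    have : (a*(-d) + b*a - c*(-b) - d*(-c) : ℤ) = 2*q := by omega
    have := congrArg (Int.cast : ℤ → ZMod 2) this
    have h20 : (2 : ZMod 2) = 0 := by decide
    push_cast at this ⊢; linear_combination this + (q : ZMod 2) * h20
  have hsum : ((a:ZMod 2) + c) + ((b:ZMod 2) + d) = 0 := by
    push_cast at hN
    have h2 := zmod2_sq (a:ZMod 2); have h3 := zmod2_sq (b:ZMod 2)
    have h4 := zmod2_sq (c:ZMod 2); have h5 := zmod2_sq (d:ZMod 2)
    linear_combination hN - h2 - h3 - h4 - h5
  have hprod : ((a:ZMod 2) + c) * ((b:ZMod 2) + d) = 0 := by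
    push_cast at hM
    have : ((2:ZMod 2)) = 0 := by decide
    linear_combination hM + ((a:ZMod 2)*(d:ZMod 2)) * this
  have hboth : ((a:ZMod 2) + c) = 0 ∧ ((b:ZMod 2) + d) = 0 := by
    rcases zmod2_mul_eq_zero hprod with h' | h'
    · exact ⟨h', by linear_combination hsum - h'⟩
    · exact ⟨by linear_combination hsum - h', h'⟩
  have hac : (2:ℤ) ∣ (a + c) := by
    have := hboth.1
    have : ((a + c : ℤ) : ZMod 2) = 0 := by push_cast; exact this
    exact (ZMod.intCast_zmod_eq_zero_iff_dvd _ 2).mp this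
  have hbd : (2:ℤ) ∣ (b + d) := by
    have := hboth.2
    have : ((b + d : ℤ) : ZMod 2) = 0 := by push_cast; exact this
    exact (ZMod.intCast_zmod_eq_zero_iff_dvd _ 2).mp this
  obtain ⟨u, hu⟩ := hac
  obtain ⟨v, hv⟩ := hbd
  refine ⟨((v - d : ℤ):ℂ) + ((u:ℤ):ℂ)*omg + ((v:ℤ):ℂ)*omg^2 + ((u - a:ℤ):ℂ)*omg^3,
    ⟨_,_,_,_, rfl⟩, ?_⟩
  rw [repr_rt2_mul]
  have hu' : (c:ℂ) = 2*u - a := by exact_mod_cast congrArg (Int.cast : ℤ → ℂ) (by omega : c = 2*u - a)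
  have hv' : (b:ℂ) = 2*v - d := by exact_mod_cast congrArg (Int.cast : ℤ → ℂ) (by omega : b = 2*v - d)
  push_cast
  linear_combination hv' * omg + hu' * omg^2

lemma main_lemma (k : ℕ) : ∀ (x : ℂ) (j : ℕ), Zomega x →
    IsGde rt2 (x * (starRingEnd ℂ) x) k → IsGde rt2 x j → j = k / 2 := by
  induction k using Nat.strong_induction_on with
  | _ k IH =>
    intro x j hx hk hj
    match k with
    | 0 =>
      have hnd : ¬ ZDvd rt2 x := by
        rintro ⟨q, hq, rfl⟩
        exact hk.2 ⟨q * (starRingEnd ℂ) (rt2 * q), hq.mul (hq.rt2_mul.conj),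
          by rw [pow_one]; ring⟩
      rcases j with _ | j
      · rfl
      · have h1 : ZDvd (rt2 ^ 1) x := zdvd_mono hj.1 (by omega)
        rw [pow_one] at h1
        exact absurd h1 hnd
    | 1 =>
      have hnd : ¬ ZDvd rt2 x := by
        rintro ⟨q, hq, rfl⟩
        refine hk.2 ⟨q * (starRingEnd ℂ) q, hq.mul hq.conj, ?_⟩
        rw [map_mul, conj_rt2]
        ring
      rcases j with _ | j
      · rfl
      · have h1 : ZDvd (rt2 ^ 1) x := zdvd_mono hj.1 (by omega)
        rw [pow_one] at h1
        exact absurd h1 hnd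
    | (k+2) =>
      have hd2 : ZDvd (rt2 ^ 2) (x * (starRingEnd ℂ) x) := zdvd_mono hk.1 (by omega)
      obtain ⟨x', hx', hex⟩ := key hx hd2
      rcases j with _ | j
      · exact absurd (⟨x', hx', by rw [pow_one]; exact hex⟩ : ZDvd (rt2 ^ 1) x) hj.2
      · have hj' : IsGde rt2 x' j := by
          constructor
          · obtain ⟨q, hq, hq2⟩ := hj.1
            refine ⟨q, hq, mul_left_cancel₀ rt2_ne ?_⟩
            rw [← hex, hq2]; ring
          · rintro ⟨q, hq, hq2⟩
            exact hj.2 ⟨q, hq, by rw [hex, hq2]; ring⟩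
        have hk' : IsGde rt2 (x' * (starRingEnd ℂ) x') k := by
          have hxx : x * (starRingEnd ℂ) x = rt2^2 * (x' * (starRingEnd ℂ) x') := by
            rw [hex, map_mul, conj_rt2]; ring
          constructor
          · obtain ⟨q, hq, hq2⟩ := hk.1
            refine ⟨q, hq, mul_left_cancel₀ (pow_ne_zero 2 rt2_ne) ?_⟩
            rw [← hxx, hq2]; ring
          · rintro ⟨q, hq, hq2⟩
            exact hk.2 ⟨q, hq, by rw [hxx, hq2]; ring⟩
        have := IH k (by omega) x' j hx' hk' hj'
        omega

/-- If gde(|x|², √2) = gde(|y|², √2) then gde(x, √2) = gde(y, √2). -/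
theorem stmt8 (x y : ℂ) (hx : Zomega x) (hy : Zomega y)
    (hx0 : x ≠ 0) (hy0 : y ≠ 0) (k jx jy : ℕ)
    (hkx : IsGde rt2 (x * (starRingEnd ℂ) x) k)
    (hky : IsGde rt2 (y * (starRingEnd ℂ) y) k)
    (hjx : IsGde rt2 x jx) (hjy : IsGde rt2 y jy) :
    jx = jy := by
  rw [main_lemma k x jx hx hkx hjx, main_lemma k y jy hy hky hjy]
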